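/- Under the following hypotheses: (i) the β-weighted decrease property — for every y ∈ X∞ there exists u ∈ U with A y + B u ∈ X∞ and β V_p(A y + B u) + ℓ(y,u) ≤ β V_p(y); (ii) V_p(y) ≤ α₂‖y‖² for all y with α₂ > 0; (iii) P ∈ ℝ^{n×n} is symmetric positive definite and satisfies xᵀPx ≤ ℓ(x,u) + (Ax+Bu)ᵀP(Ax+Bu) for all x, u; then there exist constants γ₁, γ₂ > 0 (one may take γ₁ the smallest eigenvalue of P and γ₂ = β α₂) such that γ₁‖x‖² ≤ V⁰_{N,β}(x) ≤ γ₂‖x‖² for every N ∈ ℕ and every x ∈ X∞, where V⁰_{N,β}(x) is the optimal value of the N-horizon problem with stage cost ℓ, terminal cost β V_p, and terminal constraint φ(N;x,u) ∈ X∞, and where in (i) the witnesses can be chosen with ‖u‖ ≤ c‖y‖ and V_p(A y + B u) ≤ λ² V_p(y) for some c > 0, λ ∈ [0,1), and α₁‖y‖² ≤ V_p(y) with α₁ > 0. -/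

import Mathlib

open scoped Matrix

/-- The state `φ(k; x, u)` of the linear system `x⁺ = A x + B u` at time `k`,
starting from `x(0) = x` under the control sequence `u`. -/
noncomputable def traj {n m : ℕ} (A : Matrix (Fin n) (Fin n) ℝ) (B : Matrix (Fin n) (Fin m) ℝ)
    (x : EuclideanSpace ℝ (Fin n)) (u : ℕ → EuclideanSpace ℝ (Fin m)) :
    ℕ → EuclideanSpace ℝ (Fin n)
  | 0 => x
  | k + 1 => (WithLp.toLp 2 (A.mulVec (traj A B x u k) + B.mulVec (u k)) : EuclideanSpace ℝ (Fin n))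

/-- The stage cost `ℓ(x,u) = xᵀQx + uᵀRu`. -/
noncomputable def stageCost {n m : ℕ} (Q : Matrix (Fin n) (Fin n) ℝ)
    (R : Matrix (Fin m) (Fin m) ℝ) (x : EuclideanSpace ℝ (Fin n))
    (u : EuclideanSpace ℝ (Fin m)) : ℝ :=
  (x : Fin n → ℝ) ⬝ᵥ Q.mulVec x + (u : Fin m → ℝ) ⬝ᵥ R.mulVec u

/-- The optimal value `V⁰_{N,β}(x)` of the `N`-horizon problem with stage cost `ℓ`,
terminal cost `β V_p`, and terminal constraint `φ(N; x, u) ∈ X∞`. -/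
noncomputable def V0 {n m : ℕ} (A : Matrix (Fin n) (Fin n) ℝ) (B : Matrix (Fin n) (Fin m) ℝ)
    (X : Set (EuclideanSpace ℝ (Fin n))) (U : Set (EuclideanSpace ℝ (Fin m)))
    (Xinf : Set (EuclideanSpace ℝ (Fin n)))
    (Q : Matrix (Fin n) (Fin n) ℝ) (R : Matrix (Fin m) (Fin m) ℝ)
    (Vp : EuclideanSpace ℝ (Fin n) → ℝ) (β : ℝ) (N : ℕ) (x : EuclideanSpace ℝ (Fin n)) : ℝ :=
  sInf {v : ℝ | ∃ u : ℕ → EuclideanSpace ℝ (Fin m),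
    (∀ k < N, u k ∈ U) ∧ (∀ k < N, traj A B x u k ∈ X) ∧ traj A B x u N ∈ Xinf ∧
    v = β * Vp (traj A B x u N) +
      ∑ k ∈ Finset.range N, stageCost Q R (traj A B x u k) (u k)}


lemma quad_homog {n : ℕ} (P : Matrix (Fin n) (Fin n) ℝ) (a : ℝ) (x : Fin n → ℝ) :
    (a • x) ⬝ᵥ P.mulVec (a • x) = a^2 * (x ⬝ᵥ P.mulVec x) := by
  rw [Matrix.mulVec_smul, smul_dotProduct, dotProduct_smul]
  simp only [smul_eq_mul]
  ring

lemma quad_cont {n : ℕ} (P : Matrix (Fin n) (Fin n) ℝ) :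
    Continuous fun y : EuclideanSpace ℝ (Fin n) => (y : Fin n → ℝ) ⬝ᵥ P.mulVec y := by
  simp only [dotProduct, Matrix.mulVec]
  fun_prop

lemma quad_bounds {n : ℕ} (P : Matrix (Fin n) (Fin n) ℝ) (hP : P.PosDef) :
    ∃ μ C : ℝ, 0 < μ ∧ 0 < C ∧ ∀ x : EuclideanSpace ℝ (Fin n),
      μ * ‖x‖^2 ≤ (x : Fin n → ℝ) ⬝ᵥ P.mulVec x ∧
      (x : Fin n → ℝ) ⬝ᵥ P.mulVec x ≤ C * ‖x‖^2 := by
  by_cases hn : ∃ y : EuclideanSpace ℝ (Fin n), ‖y‖ = 1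
  · obtain ⟨y₀, hy₀⟩ := hn
    have hS : IsCompact (Metric.sphere (0 : EuclideanSpace ℝ (Fin n)) 1) := isCompact_sphere _ _
    have hne : (Metric.sphere (0 : EuclideanSpace ℝ (Fin n)) 1).Nonempty :=
      ⟨y₀, by simpa using hy₀⟩
    obtain ⟨ymin, hyminS, hmin⟩ := hS.exists_isMinOn hne (quad_cont P).continuousOn
    obtain ⟨ymax, hymaxS, hmax⟩ := hS.exists_isMaxOn hne (quad_cont P).continuousOn
    have hμ : 0 < (ymin : Fin n → ℝ) ⬝ᵥ P.mulVec ymin := by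
      have hne0 : (ymin : Fin n → ℝ) ≠ 0 := by
        intro h
        have : ‖ymin‖ = 1 := by simpa using hyminS
        rw [show ymin = 0 from WithLp.ofLp_injective 2 h] at this
        simp at this
      simpa using hP.dotProduct_mulVec_pos hne0
    have hmin' : ∀ y ∈ Metric.sphere (0 : EuclideanSpace ℝ (Fin n)) 1,
        (ymin : Fin n → ℝ) ⬝ᵥ P.mulVec ymin ≤ (y : Fin n → ℝ) ⬝ᵥ P.mulVec y :=
      fun y hy => hmin hy
    have hmax' : ∀ y ∈ Metric.sphere (0 : EuclideanSpace ℝ (Fin n)) 1,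
        (y : Fin n → ℝ) ⬝ᵥ P.mulVec y ≤ (ymax : Fin n → ℝ) ⬝ᵥ P.mulVec ymax :=
      fun y hy => hmax hy
    refine ⟨(ymin : Fin n → ℝ) ⬝ᵥ P.mulVec ymin,
      (ymax : Fin n → ℝ) ⬝ᵥ P.mulVec ymax + 1, hμ, ?_, fun x => ?_⟩
    · have := hmin' ymax hymaxS
      linarith
    · rcases eq_or_ne x 0 with rfl | hx
      · simp [Matrix.mulVec_zero]
      · have hnx : (0:ℝ) < ‖x‖ := norm_pos_iff.2 hx
        set y : EuclideanSpace ℝ (Fin n) := ‖x‖⁻¹ • x with hy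
        have hyS : y ∈ Metric.sphere (0 : EuclideanSpace ℝ (Fin n)) 1 := by
          simp [hy, norm_smul, abs_of_pos (inv_pos.2 hnx), inv_mul_cancel₀ hnx.ne']
        have hxy : ‖x‖ • (y : Fin n → ℝ) = (x : Fin n → ℝ) := by
          funext i
          simp only [hy, Pi.smul_apply, PiLp.smul_apply, smul_eq_mul]
          field_simp
        have hq : (x : Fin n → ℝ) ⬝ᵥ P.mulVec x = ‖x‖^2 * ((y : Fin n → ℝ) ⬝ᵥ P.mulVec y) := by
          conv_lhs => rw [← hxy]
          rw [quad_homog]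
        constructor
        · rw [hq]
          have := hmin' y hyS
          nlinarith [sq_nonneg ‖x‖]
        · rw [hq]
          have h1 := hmax' y hyS
          have h2 := hmin' y hyS
          nlinarith [sq_nonneg ‖x‖, hμ]
  · push_neg at hn
    refine ⟨1, 1, one_pos, one_pos, fun x => ?_⟩
    have hx : x = 0 := by
      by_contra h
      exact absurd (by simp [norm_smul, abs_of_pos (inv_pos.2 (norm_pos_iff.2 h)),
        inv_mul_cancel₀ (norm_pos_iff.2 h).ne'] : ‖(‖x‖⁻¹ • x : EuclideanSpace ℝ (Fin n))‖ = 1)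
        (hn _)
    subst hx
    simp [Matrix.mulVec_zero]

/-- Under (i) the `β`-weighted decrease property on the maximal
controllable set `X∞` (with witnesses `‖u‖ ≤ c‖y‖` and `V_p(Ay+Bu) ≤ λ² V_p(y)`),
(ii) the quadratic bounds `α₁‖y‖² ≤ V_p(y) ≤ α₂‖y‖²`, and (iii) a symmetric positive
definite `P` satisfying the Bellman-type inequality, there exist `γ₁, γ₂ > 0` such that
`γ₁‖x‖² ≤ V⁰_{N,β}(x) ≤ γ₂‖x‖²` for every horizon `N` and every `x ∈ X∞`. -/
theorem stmt_10 {n m : ℕ} (A : Matrix (Fin n) (Fin n) ℝ) (B : Matrix (Fin n) (Fin m) ℝ)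
    (X : Set (EuclideanSpace ℝ (Fin n))) (U : Set (EuclideanSpace ℝ (Fin m)))
    (Q : Matrix (Fin n) (Fin n) ℝ) (R : Matrix (Fin m) (Fin m) ℝ)
    (hQ : Q.PosSemidef) (hR : R.PosSemidef)
    (Xinf : Set (EuclideanSpace ℝ (Fin n)))
    (hXinf : Xinf = {x | ∃ u : ℕ → EuclideanSpace ℝ (Fin m),
      (∀ k, u k ∈ U) ∧ (∀ k, traj A B x u k ∈ X) ∧
      Filter.Tendsto (fun k => traj A B x u k) Filter.atTop (nhds 0)})
    (Vp : EuclideanSpace ℝ (Fin n) → ℝ) (α₁ α₂ lam c β : ℝ)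
    (hα₁ : 0 < α₁) (hα₂ : 0 < α₂) (hlam0 : 0 ≤ lam) (hlam1 : lam < 1)
    (hc : 0 < c) (hβ : 0 < β)
    (hlow : ∀ y : EuclideanSpace ℝ (Fin n), α₁ * ‖y‖ ^ 2 ≤ Vp y)
    (hupp : ∀ y : EuclideanSpace ℝ (Fin n), Vp y ≤ α₂ * ‖y‖ ^ 2)
    (hdec : ∀ y ∈ Xinf, ∃ u ∈ U, ‖u‖ ≤ c * ‖y‖ ∧
      (WithLp.toLp 2 (A.mulVec y + B.mulVec u) : EuclideanSpace ℝ (Fin n)) ∈ Xinf ∧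
      Vp (WithLp.toLp 2 (A.mulVec y + B.mulVec u) : EuclideanSpace ℝ (Fin n)) ≤ lam ^ 2 * Vp y ∧
      β * Vp (WithLp.toLp 2 (A.mulVec y + B.mulVec u) : EuclideanSpace ℝ (Fin n)) + stageCost Q R y u ≤
        β * Vp y)
    (P : Matrix (Fin n) (Fin n) ℝ) (hP : P.PosDef)
    (hBellman : ∀ (x : EuclideanSpace ℝ (Fin n)) (u : EuclideanSpace ℝ (Fin m)),
      (x : Fin n → ℝ) ⬝ᵥ P.mulVec x ≤ stageCost Q R x u +
        ((A.mulVec x + B.mulVec u : Fin n → ℝ)) ⬝ᵥ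
          P.mulVec (A.mulVec x + B.mulVec u)) :
    ∃ γ₁ γ₂ : ℝ, 0 < γ₁ ∧ 0 < γ₂ ∧
      ∀ N : ℕ, ∀ x ∈ Xinf,
        γ₁ * ‖x‖ ^ 2 ≤ V0 A B X U Xinf Q R Vp β N x ∧
          V0 A B X U Xinf Q R Vp β N x ≤ γ₂ * ‖x‖ ^ 2 := by

  classical
  obtain ⟨μ, C, hμ, hC, hPq⟩ := quad_bounds P hP
  have hl : ∀ (y : EuclideanSpace ℝ (Fin n)) (u : EuclideanSpace ℝ (Fin m)),
      0 ≤ stageCost Q R y u := by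
    intro y u
    have h1 := hQ.dotProduct_mulVec_nonneg y
    have h2 := hR.dotProduct_mulVec_nonneg u
    simp only [star_trivial] at h1 h2
    exact add_nonneg h1 h2
  have hVp0 : ∀ y, 0 ≤ Vp y := fun y => le_trans (by positivity) (hlow y)
  have hXsub : Xinf ⊆ X := by
    intro y hy
    rw [hXinf] at hy
    obtain ⟨u, -, hxX, -⟩ := hy
    simpa [traj] using hxX 0
  choose! uF hU hnorm hmem hVd hineq using hdec
  set t : ℝ := min 1 (β * α₁ / C) with htdef
  have ht : 0 < t := lt_min one_pos (by positivity)
  have ht1 : t ≤ 1 := min_le_left _ _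
  have ht2 : t ≤ β * α₁ / C := min_le_right _ _
  refine ⟨t * μ, β * α₂, by positivity, by positivity, ?_⟩
  intro N x hx
  set S : Set ℝ := {v : ℝ | ∃ u : ℕ → EuclideanSpace ℝ (Fin m),
    (∀ k < N, u k ∈ U) ∧ (∀ k < N, traj A B x u k ∈ X) ∧ traj A B x u N ∈ Xinf ∧
    v = β * Vp (traj A B x u N) +
      ∑ k ∈ Finset.range N, stageCost Q R (traj A B x u k) (u k)} with hS
  have hV0 : V0 A B X U Xinf Q R Vp β N x = sInf S := rfl
  -- feasible trajectory construction
  let z : ℕ → EuclideanSpace ℝ (Fin n) := fun k =>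
    Nat.rec x (fun _ zk => (WithLp.toLp 2 (A.mulVec zk + B.mulVec (uF zk)) : EuclideanSpace ℝ (Fin n))) k
  have hzs : ∀ k, z (k + 1) =
      (WithLp.toLp 2 (A.mulVec (z k) + B.mulVec (uF (z k))) : EuclideanSpace ℝ (Fin n)) := fun k => rfl
  have hzmem : ∀ k, z k ∈ Xinf := by
    intro k
    induction k with
    | zero => exact hx
    | succ k ih => rw [hzs]; exact hmem _ ih
  set w : ℕ → EuclideanSpace ℝ (Fin m) := fun k => uF (z k) with hwdef
  have htr : ∀ k, traj A B x w k = z k := by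
    intro k
    induction k with
    | zero => rfl
    | succ k ih =>
      rw [show traj A B x w (k + 1) =
        (WithLp.toLp 2 (A.mulVec (traj A B x w k) + B.mulVec (w k)) : EuclideanSpace ℝ (Fin n)) from rfl, ih,
        hzs]
  have htel : ∀ M : ℕ,
      β * Vp (z M) + ∑ k ∈ Finset.range M, stageCost Q R (z k) (w k) ≤ β * Vp x := by
    intro M
    induction M with
    | zero => simp [z]
    | succ M ih =>
      rw [Finset.sum_range_succ]
      have h := hineq (z M) (hzmem M)
      rw [hzs M]
      simp only [hwdef]
      linarith
  have hmemS : (β * Vp (traj A B x w N) +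
      ∑ k ∈ Finset.range N, stageCost Q R (traj A B x w k) (w k)) ∈ S := by
    refine ⟨w, fun k _ => hU _ (hzmem k), fun k _ => ?_, ?_, rfl⟩
    · rw [htr]; exact hXsub (hzmem k)
    · rw [htr]; exact hzmem N
  -- lower bound on every element of S
  have hlb : ∀ v ∈ S, t * μ * ‖x‖ ^ 2 ≤ v := by
    rintro v ⟨u, -, -, -, rfl⟩
    have tele : ∀ M : ℕ, (x : Fin n → ℝ) ⬝ᵥ P.mulVec x ≤
        (∑ k ∈ Finset.range M, stageCost Q R (traj A B x u k) (u k)) +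
        (traj A B x u M : Fin n → ℝ) ⬝ᵥ P.mulVec (traj A B x u M) := by
      intro M
      induction M with
      | zero => simp [traj]
      | succ M ih =>
        rw [Finset.sum_range_succ]
        have hB := hBellman (traj A B x u M) (u M)
        rw [show traj A B x u (M + 1) =
          (WithLp.toLp 2 (A.mulVec (traj A B x u M) + B.mulVec (u M)) : EuclideanSpace ℝ (Fin n)) from rfl]
        linarith
    have h1 := tele N
    set yN := traj A B x u N with hyN
    have hq1 := (hPq yN).1
    have hq2 := (hPq yN).2
    have hsum0 : 0 ≤ ∑ k ∈ Finset.range N, stageCost Q R (traj A B x u k) (u k) :=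
      Finset.sum_nonneg fun k _ => hl _ _
    have hyP : 0 ≤ (yN : Fin n → ℝ) ⬝ᵥ P.mulVec yN := le_trans (by positivity) hq1
    have h2 : t * ((yN : Fin n → ℝ) ⬝ᵥ P.mulVec yN) ≤ β * Vp yN := by
      have hVl := hlow yN
      calc t * ((yN : Fin n → ℝ) ⬝ᵥ P.mulVec yN)
          ≤ (β * α₁ / C) * ((yN : Fin n → ℝ) ⬝ᵥ P.mulVec yN) :=
            mul_le_mul_of_nonneg_right ht2 hyP
        _ ≤ (β * α₁ / C) * (C * ‖yN‖ ^ 2) := by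
            apply mul_le_mul_of_nonneg_left hq2 (by positivity)
        _ = β * α₁ * ‖yN‖ ^ 2 := by field_simp
        _ ≤ β * Vp yN := by nlinarith
    have hxq := (hPq x).1
    nlinarith [mul_le_mul_of_nonneg_left h1 ht.le,
      mul_le_mul_of_nonneg_left hsum0 (sub_nonneg.mpr ht1)]
  rw [hV0]
  constructor
  · exact le_csInf ⟨_, hmemS⟩ hlb
  · have hle : sInf S ≤ β * Vp (traj A B x w N) +
        ∑ k ∈ Finset.range N, stageCost Q R (traj A B x w k) (w k) :=
      csInf_le ⟨t * μ * ‖x‖ ^ 2, fun v hv => hlb v hv⟩ hmemS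
    have hcost : β * Vp (traj A B x w N) +
        ∑ k ∈ Finset.range N, stageCost Q R (traj A B x w k) (w k) ≤ β * Vp x := by
      simp only [htr]
      exact htel N
    have : β * Vp x ≤ β * α₂ * ‖x‖ ^ 2 := by
      have := hupp x
      nlinarith
    linarith
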